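/- arXiv:2402.18315 — 3 statements merged into one kernel-verified Lean document; each statement's English description precedes it below -/
import Mathlib

section
/- There exist a critical rainfall value R_c ∈ (1.42, 1.43) and a point x_c ∈ (2.9, 3) such that f_{R_c}(x_c) = 0 and f'_{R_c}(x_c) = 0, i.e. the cubic f_{R_c} has a positive double root (the saddle-node bifurcation point of the vegetation–water system). -/
/-- The cubic whose positive roots give the nontrivial equilibria of the
vegetation–water system (ρ = 1, K = 10, β = 3, x₀ = 1, α = 1, λ = 0.12). -/
noncomputable def fR (R x : ℝ) : ℝ :=
  0.12 * x ^ 3 + 1.12 * x ^ 2 + (4.6 - 10 * R) * x + (30 - 10 * R)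

/-- There exist R_c ∈ (1.42, 1.43) and x_c ∈ (2.9, 3) with f_{R_c}(x_c) = 0 and
f'_{R_c}(x_c) = 0: the cubic has a positive double root (saddle-node bifurcation point). -/
theorem saddle_node_bifurcation_exists :
    ∃ Rc ∈ Set.Ioo (1.42 : ℝ) 1.43, ∃ xc ∈ Set.Ioo (2.9 : ℝ) 3,
      fR Rc xc = 0 ∧ deriv (fR Rc) xc = 0 := by
  set g : ℝ → ℝ := fun x => -0.24 * x ^ 3 - 1.48 * x ^ 2 - 2.24 * x + 25.4 with hg
  have hcont : ContinuousOn g (Set.Icc (2.93 : ℝ) 2.94) := by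
    apply Continuous.continuousOn; fun_prop
  have hsub : Set.Ioo (g 2.94) (g 2.93) ⊆ g '' Set.Ioo (2.93 : ℝ) 2.94 :=
    intermediate_value_Ioo' (by norm_num) hcont
  have h0 : (0 : ℝ) ∈ Set.Ioo (g 2.94) (g 2.93) := by
    constructor <;> · simp only [hg]; norm_num
  obtain ⟨xc, hxc, hgxc⟩ := hsub h0
  set Rc : ℝ := (0.36 * xc ^ 2 + 2.24 * xc + 4.6) / 10 with hRc
  have hx1 : (2.93 : ℝ) < xc := hxc.1
  have hx2 : xc < (2.94 : ℝ) := hxc.2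
  refine ⟨Rc, ⟨by nlinarith, by nlinarith⟩, xc, ⟨by linarith, by linarith⟩, ?_, ?_⟩
  · simp only [fR, hRc]
    simp only [hg] at hgxc
    nlinarith [hgxc]
  · have hd : HasDerivAt (fR Rc) (0.36 * xc ^ 2 + 2.24 * xc + (4.6 - 10 * Rc)) xc := by
      have h1 := ((hasDerivAt_pow 3 xc).const_mul (0.12 : ℝ)).add
        (((hasDerivAt_pow 2 xc).const_mul (1.12 : ℝ)).add
          (((hasDerivAt_id xc).const_mul (4.6 - 10 * Rc)).add_const (30 - 10 * Rc)))
      have h2 : (fR Rc) = fun x : ℝ => 0.12 * x ^ 3 + (1.12 * x ^ 2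
          + ((4.6 - 10 * Rc) * id x + (30 - 10 * Rc))) := by
        funext x; simp [fR]; ring
      rw [h2]
      refine h1.congr_deriv ?_
      push_cast
      ring
    rw [hd.deriv, hRc]
    ring
end

section
/- If R_c ∈ (1.42, 1.43) and x_c > 0 satisfy f_{R_c}(x_c) = 0 and f'_{R_c}(x_c) = 0, then f_{R_c}(x) > 0 for every x ∈ [0, ∞) with x ≠ x_c; in particular x_c is the unique nonnegative root of f_{R_c} and the third real root of the cubic f_{R_c} is negative. -/
/-- If R_c ∈ (1.42, 1.43) and x_c > 0 give a double root of f_{R_c}, then f_{R_c}(x) > 0 for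
every x ∈ [0,∞) with x ≠ x_c; in particular x_c is the unique nonnegative root and the third
real root of the cubic is negative. -/
theorem double_root_is_unique_nonneg_root (Rc xc : ℝ)
    (hRc : Rc ∈ Set.Ioo (1.42 : ℝ) 1.43) (hxc : 0 < xc)
    (hroot : fR Rc xc = 0) (hderiv : deriv (fR Rc) xc = 0) :
    (∀ x : ℝ, 0 ≤ x → x ≠ xc → 0 < fR Rc x) ∧
    (∀ x : ℝ, 0 ≤ x → fR Rc x = 0 → x = xc) ∧
    (∀ x : ℝ, fR Rc x = 0 → x ≠ xc → x < 0) := by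
  -- compute the derivative
  have hD : HasDerivAt (fR Rc)
      (0.36 * xc ^ 2 + 2.24 * xc + (4.6 - 10 * Rc)) xc := by
    unfold fR
    have h3 : HasDerivAt (fun x : ℝ => x ^ 3) (3 * xc ^ 2) xc := by
      simpa using hasDerivAt_pow 3 xc
    have h2 : HasDerivAt (fun x : ℝ => x ^ 2) (2 * xc) xc := by
      simpa using hasDerivAt_pow 2 xc
    have h := ((h3.const_mul 0.12).add (h2.const_mul 1.12)).add
      (((hasDerivAt_id xc).const_mul (4.6 - 10 * Rc)).add_const (30 - 10 * Rc))
    convert h using 1 <;> (try exact rfl)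
    · funext x
      simp only [id, Pi.add_apply]
      ring
    · ring
  have hE2 : 0.36 * xc ^ 2 + 2.24 * xc + (4.6 - 10 * Rc) = 0 := by
    have := hD.deriv
    rw [hderiv] at this
    nlinarith [this]
  have hroot' : 0.12 * xc ^ 3 + 1.12 * xc ^ 2 + (4.6 - 10 * Rc) * xc + (30 - 10 * Rc) = 0 := hroot
  -- factorization
  have key : ∀ x : ℝ, fR Rc x = 0.12 * (x - xc) ^ 2 * (x + 28 / 3 + 2 * xc) := by
    intro x
    unfold fR
    linear_combination hroot' + (x - xc) * hE2
  have hpos : ∀ x : ℝ, 0 ≤ x → x ≠ xc → 0 < fR Rc x := by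
    intro x hx hne
    rw [key]
    have h1 : 0 < (x - xc) ^ 2 := pow_two_pos_of_ne_zero (sub_ne_zero.mpr hne)
    have h2 : 0 < x + 28 / 3 + 2 * xc := by linarith
    have : (0:ℝ) < 0.12 := by norm_num
    exact mul_pos (mul_pos this h1) h2
  refine ⟨hpos, fun x hx hfx => ?_, fun x hfx hne => ?_⟩
  · by_contra hne
    exact absurd hfx (ne_of_gt (hpos x hx hne))
  · by_contra hge
    push_neg at hge
    exact absurd hfx (ne_of_gt (hpos x hge hne))
end

section
/- Let b : ℝⁿ → ℝⁿ be continuous, a : ℝⁿ → (n×n real matrices) continuous with a(x) symmetric and invertible for all x, and let V : ℝⁿ → ℝ be continuously differentiable and satisfy the Hamilton–Jacobi equation ⟨∇V(x), b(x)⟩ + ½⟨∇V(x), a(x)∇V(x)⟩ = 0 for all x. If φ : [0,T] → ℝⁿ is a continuously differentiable path satisfying φ̇(t) = b(φ(t)) + a(φ(t))∇V(φ(t)), then the Freidlin–Wentzell action of φ equals the quasipotential increment: ½∫₀ᵀ ⟨φ̇(t) − b(φ(t)), a(φ(t))⁻¹(φ̇(t) − b(φ(t)))⟩ dt = V(φ(T))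 − V(φ(0)). -/
open scoped BigOperators

/-- Euclidean inner product on ℝⁿ. -/
noncomputable def dotp {n : ℕ} (u v : Fin n → ℝ) : ℝ := ∑ i, u i * v i

/-- Gradient of a scalar field on ℝⁿ. -/
noncomputable def grad {n : ℕ} (f : (Fin n → ℝ) → ℝ) (x : Fin n → ℝ) : Fin n → ℝ :=
  fun i => fderiv ℝ f x (Pi.single i 1)

lemma clm_apply_eq_dotp {n : ℕ} (L : (Fin n → ℝ) →L[ℝ] ℝ) (y : Fin n → ℝ) :
    L y = dotp (fun i => L (Pi.single i 1)) y := by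
  have := (L.toLinearMap).pi_apply_eq_sum_univ y
  simp only [ContinuousLinearMap.coe_coe] at this
  rw [this, dotp]
  refine Finset.sum_congr rfl fun i _ => ?_
  rw [smul_eq_mul, mul_comm]
  congr 1
  congr 1
  funext j
  simp [Pi.single_apply, eq_comm]

/-- Along a solution of the fluctuation dynamics φ̇ = b(φ) + a(φ)∇V(φ), the
Freidlin–Wentzell action equals the quasipotential increment:
½∫₀ᵀ ⟨φ̇ − b(φ), a(φ)⁻¹(φ̇ − b(φ))⟩ dt = V(φ(T)) − V(φ(0)). -/
theorem action_along_most_probable_path {n : ℕ}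
    (b : (Fin n → ℝ) → Fin n → ℝ) (hb : Continuous b)
    (a : (Fin n → ℝ) → Matrix (Fin n) (Fin n) ℝ)
    (ha : ∀ i j, Continuous fun x => a x i j)
    (hsym : ∀ x i j, a x i j = a x j i)
    (hainv : ∀ x, IsUnit (a x))
    (V : (Fin n → ℝ) → ℝ) (hV : ContDiff ℝ 1 V)
    (hHJ : ∀ x, dotp (grad V x) (b x)
        + (1 / 2) * dotp (grad V x) ((a x).mulVec (grad V x)) = 0)
    (T : ℝ) (hT : 0 ≤ T)
    (φ : ℝ → Fin n → ℝ) (hφsmooth : ContDiff ℝ 1 φ)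
    (hφ : ∀ t ∈ Set.Icc (0 : ℝ) T,
      HasDerivAt φ (b (φ t) + (a (φ t)).mulVec (grad V (φ t))) t) :
    (1 / 2) * ∫ t in (0 : ℝ)..T,
        dotp (deriv φ t - b (φ t)) ((a (φ t))⁻¹.mulVec (deriv φ t - b (φ t)))
      = V (φ T) - V (φ 0) := by
  have huIcc : Set.uIcc (0:ℝ) T = Set.Icc 0 T := Set.uIcc_of_le hT
  set g : ℝ → Fin n → ℝ := fun t => grad V (φ t) with hg
  set h : ℝ → ℝ := fun t => dotp (g t) ((a (φ t)).mulVec (g t)) with hhdef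
  -- continuity of h
  have hφc : Continuous φ := hφsmooth.continuous
  have hgradc : Continuous fun x => grad V x := by
    refine continuous_pi fun i => ?_
    exact (ContinuousLinearMap.apply ℝ ℝ (Pi.single i (1:ℝ))).continuous.comp
      (hV.continuous_fderiv one_ne_zero)
  have hgc : Continuous g := hgradc.comp hφc
  have hhc : Continuous h := by
    simp only [hhdef, dotp, Matrix.mulVec, dotProduct]
    refine continuous_finset_sum _ fun i _ => ?_
    refine ((continuous_apply i).comp hgc).mul ?_
    exact continuous_finset_sum _ fun j _ =>
      ((ha i j).comp hφc).mul ((continuous_apply j).comp hgc)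
  -- derivative of V ∘ φ
  have hderiv : ∀ t ∈ Set.uIcc (0:ℝ) T, HasDerivAt (V ∘ φ) ((1/2) * h t) t := by
    intro t ht
    rw [huIcc] at ht
    have hd := (hV.differentiable one_ne_zero (φ t)).hasFDerivAt.comp_hasDerivAt t (hφ t ht)
    have hval : fderiv ℝ V (φ t) (b (φ t) + (a (φ t)).mulVec (g t)) = (1/2) * h t := by
      rw [clm_apply_eq_dotp]
      have hsplit : dotp (fun i => fderiv ℝ V (φ t) (Pi.single i 1))
          (b (φ t) + (a (φ t)).mulVec (g t))
          = dotp (g t) (b (φ t)) + dotp (g t) ((a (φ t)).mulVec (g t)) := by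
        simp [dotp, hg, grad, mul_add, Finset.sum_add_distrib]
      rw [hsplit]
      have := hHJ (φ t)
      have hgt : grad V (φ t) = g t := rfl
      rw [hgt] at this
      have : dotp (g t) (b (φ t)) = -((1/2) * h t) := by rw [hhdef]; linarith
      rw [this, hhdef]; ring
    rwa [hval] at hd
  have hint : IntervalIntegrable (fun t => (1/2) * h t) MeasureTheory.volume 0 T :=
    (continuous_const.mul hhc).intervalIntegrable 0 T
  have hFTC : ∫ t in (0:ℝ)..T, (1/2) * h t = V (φ T) - V (φ 0) := by
    simpa using intervalIntegral.integral_eq_sub_of_hasDerivAt hderiv hint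
  -- integrand equals h on the interval
  have hcongr : Set.EqOn (fun t =>
      dotp (deriv φ t - b (φ t)) ((a (φ t))⁻¹.mulVec (deriv φ t - b (φ t))))
      h (Set.uIcc (0:ℝ) T) := by
    intro t ht
    rw [huIcc] at ht
    have hder : deriv φ t = b (φ t) + (a (φ t)).mulVec (g t) := (hφ t ht).deriv
    have hsub : deriv φ t - b (φ t) = (a (φ t)).mulVec (g t) := by
      rw [hder]; abel
    have hinv : (a (φ t))⁻¹.mulVec ((a (φ t)).mulVec (g t)) = g t := by
      rw [Matrix.mulVec_mulVec,
        Matrix.nonsing_inv_mul _ ((Matrix.isUnit_iff_isUnit_det _).mp (hainv _)),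
        Matrix.one_mulVec]
    simp only [hsub, hinv, hhdef]
    simp [dotp, mul_comm]
  calc (1 / 2) * ∫ t in (0 : ℝ)..T,
        dotp (deriv φ t - b (φ t)) ((a (φ t))⁻¹.mulVec (deriv φ t - b (φ t)))
      = (1/2) * ∫ t in (0:ℝ)..T, h t := by
        rw [intervalIntegral.integral_congr hcongr]
    _ = ∫ t in (0:ℝ)..T, (1/2) * h t := (intervalIntegral.integral_const_mul _ _).symm
    _ = V (φ T) - V (φ 0) := hFTC
end
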